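/- Let G be a finite simple graph with vertex set V and edge set E, and let U = |E|. Then the number of partitions of V all of whose blocks are cliques of G is at most 2^U. -/

import Mathlib

/-- For a finite simple graph G with U edges, the number of partitions of the
vertex set all of whose blocks are cliques of G is at most 2^U. -/
theorem card_clique_partitions_le {V : Type*} [Fintype V] [DecidableEq V]
    (G : SimpleGraph V) [DecidableRel G.Adj] :
    Nat.card {P : Finpartition (Finset.univ : Finset V) //
        ∀ s ∈ P.parts, G.IsClique (s : Set V)}
      ≤ 2 ^ G.edgeFinset.card := by
  classical
  set f : {P : Finpartition (Finset.univ : Finset V) //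
      ∀ s ∈ P.parts, G.IsClique (s : Set V)} → {A : Finset (Sym2 V) // A ∈ G.edgeFinset.powerset} :=
    fun P => ⟨G.edgeFinset.filter (fun e => ∃ s ∈ P.1.parts, ∀ v ∈ e, v ∈ s),
      Finset.mem_powerset.2 (Finset.filter_subset _ _)⟩ with hf
  have key : ∀ (P : {P : Finpartition (Finset.univ : Finset V) //
      ∀ s ∈ P.parts, G.IsClique (s : Set V)}) (u v : V),
      (∃ s ∈ P.1.parts, u ∈ s ∧ v ∈ s) ↔ u = v ∨ s(u, v) ∈ (f P).1 := by
    intro P u v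
    constructor
    · rintro ⟨s, hs, hu, hv⟩
      by_cases huv : u = v
      · exact Or.inl huv
      · refine Or.inr (Finset.mem_filter.2 ⟨?_, s, hs, ?_⟩)
        · exact SimpleGraph.mem_edgeFinset.2 (P.2 s hs hu hv huv)
        · intro w hw
          rcases Sym2.mem_iff.1 hw with rfl | rfl <;> assumption
    · rintro (rfl | h)
      · obtain ⟨s, hs, hu⟩ := P.1.exists_mem (Finset.mem_univ u)
        exact ⟨s, hs, hu, hu⟩
      · obtain ⟨s, hs, hmem⟩ := (Finset.mem_filter.1 h).2
        exact ⟨s, hs, hmem u (Sym2.mem_mk_left u v), hmem v (Sym2.mem_mk_right u v)⟩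
  have hinj : Function.Injective f := by
    intro P Q hPQ
    have hrel : ∀ u v : V, (∃ s ∈ P.1.parts, u ∈ s ∧ v ∈ s) ↔
        (∃ s ∈ Q.1.parts, u ∈ s ∧ v ∈ s) := by
      intro u v
      rw [key P u v, key Q u v, hPQ]
    have hsub : ∀ (P Q : {P : Finpartition (Finset.univ : Finset V) //
        ∀ s ∈ P.parts, G.IsClique (s : Set V)}),
        (∀ u v : V, (∃ s ∈ P.1.parts, u ∈ s ∧ v ∈ s) ↔
          (∃ s ∈ Q.1.parts, u ∈ s ∧ v ∈ s)) → P.1.parts ⊆ Q.1.parts := by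
      intro P Q hrel s hs
      obtain ⟨x, hx⟩ := P.1.nonempty_of_mem_parts hs
      have hxu : x ∈ (Finset.univ : Finset V) := Finset.mem_univ x
      have : s = Q.1.part x := by
        ext v
        constructor
        · intro hv
          obtain ⟨t, ht, hxt, hvt⟩ := (hrel x v).1 ⟨s, hs, hx, hv⟩
          rw [Q.1.part_eq_of_mem ht hxt]; exact hvt
        · intro hv
          obtain ⟨t, ht, hxt, hvt⟩ := (hrel x v).2
            ⟨Q.1.part x, Q.1.part_mem.2 hxu, Q.1.mem_part hxu, hv⟩
          rwa [P.1.eq_of_mem_parts hs ht hx hxt]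
      rw [this]; exact Q.1.part_mem.2 hxu
    ext1
    exact Finpartition.ext (Finset.Subset.antisymm (hsub P Q hrel)
      (hsub Q P (fun u v => (hrel u v).symm)))
  calc Nat.card {P : Finpartition (Finset.univ : Finset V) //
        ∀ s ∈ P.parts, G.IsClique (s : Set V)}
      ≤ Nat.card {A : Finset (Sym2 V) // A ∈ G.edgeFinset.powerset} :=
        Nat.card_le_card_of_injective f hinj
    _ = 2 ^ G.edgeFinset.card := by
        rw [Nat.card_eq_fintype_card, Fintype.card_coe, Finset.card_powerset]
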